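/- Let G be an m-tree-connected graph with an m-sparse spanning subgraph M. If G - e is not m-tree-connected for every edge e of G not in M, then G is minimally m-tree-connected, i.e., |E(G)| = m(|V(G)|-1). -/

import Mathlib

open SimpleGraph

def IsTreeConn {V : Type*} (m : ℕ) (G : SimpleGraph V) : Prop :=
  ∃ T : Fin m → SimpleGraph V, (∀ i, T i ≤ G) ∧ (∀ i, (T i).IsTree) ∧
    ∀ i j, i ≠ j → Disjoint (T i).edgeSet (T j).edgeSet

noncomputable def eIn {V : Type*} (G : SimpleGraph V) (S : Set V) : ℕ :=
  {e ∈ G.edgeSet | ∀ v ∈ e, v ∈ S}.ncard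

def IsSparse {V : Type*} (m : ℕ) (G : SimpleGraph V) : Prop :=
  ∀ S : Set V, S.Nonempty → (eIn G S : ℤ) ≤ m * S.ncard - m

def mComp {V : Type*} (m : ℕ) (G : SimpleGraph V) (v : V) : Set V :=
  ⋃₀ {X : Set V | v ∈ X ∧ IsTreeConn m (G.induce X)}

noncomputable def crossE {V : Type*} (m : ℕ) (G : SimpleGraph V) : ℕ :=
  {e ∈ G.edgeSet | ∃ u ∈ e, ∃ w ∈ e, mComp m G u ≠ mComp m G w}.ncard

noncomputable def Omega {V : Type*} (m : ℕ) (G : SimpleGraph V) : ℤ :=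
  m * (Set.range (mComp m G)).ncard - crossE m G


namespace TreeAux

variable {V : Type*}

lemma reachable_transfer {G G' : SimpleGraph V}
    (h : ∀ a b : V, G.Adj a b → G'.Reachable a b) {u v : V} (huv : G.Reachable u v) :
    G'.Reachable u v := by
  obtain ⟨p⟩ := huv
  induction p with
  | nil => exact Reachable.refl _
  | cons ha _ ih => exact (h _ _ ha).trans ih

lemma connected_transfer {G G' : SimpleGraph V} (hG : G.Connected)
    (h : ∀ a b : V, G.Adj a b → G'.Reachable a b) : G'.Connected := by
  have : Nonempty V := hG.nonempty
  exact ⟨fun u v => reachable_transfer h (hG.preconnected u v)⟩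

noncomputable def tPath {T : SimpleGraph V} (hT : T.IsTree) (u v : V) : T.Walk u v :=
  ((SimpleGraph.isTree_iff_existsUnique_path.mp hT).2 u v).choose

lemma tPath_isPath {T : SimpleGraph V} (hT : T.IsTree) (u v : V) : (tPath hT u v).IsPath :=
  ((SimpleGraph.isTree_iff_existsUnique_path.mp hT).2 u v).choose_spec.1

lemma tPath_unique {T : SimpleGraph V} (hT : T.IsTree) {u v : V} (p : T.Walk u v)
    (hp : p.IsPath) : p = tPath hT u v :=
  ((SimpleGraph.isTree_iff_existsUnique_path.mp hT).2 u v).choose_spec.2 p hp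

end TreeAux

namespace TreeAux
variable {V : Type*}

lemma tPath_edges_subset_walk {T : SimpleGraph V} (hT : T.IsTree) {u v : V} (w : T.Walk u v) :
    ∀ e ∈ (tPath hT u v).edges, e ∈ w.edges := by
  classical
  intro e he
  have hb : w.bypass = tPath hT u v := tPath_unique hT w.bypass w.bypass_isPath
  exact w.edges_bypass_subset (hb ▸ he)

lemma tPath_nil {T : SimpleGraph V} (hT : T.IsTree) (v : V) : (tPath hT v v).edges = [] := by
  have : (SimpleGraph.Walk.nil : T.Walk v v) = tPath hT v v :=
    tPath_unique hT _ SimpleGraph.Walk.IsPath.nil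
  rw [← this]; rfl

lemma tPath_symm_edges {T : SimpleGraph V} (hT : T.IsTree) (u v : V) {e : Sym2 V} :
    e ∈ (tPath hT v u).edges ↔ e ∈ (tPath hT u v).edges := by
  have : (tPath hT u v).reverse = tPath hT v u :=
    tPath_unique hT _ ((tPath_isPath hT u v).reverse)
  rw [← this, SimpleGraph.Walk.edges_reverse, List.mem_reverse]

lemma tPath_adj {T : SimpleGraph V} (hT : T.IsTree) {u v : V} (h : T.Adj u v) :
    (tPath hT u v).edges = [s(u, v)] := by
  have hp : (SimpleGraph.Walk.cons h SimpleGraph.Walk.nil).IsPath := by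
    simp [SimpleGraph.Walk.cons_isPath_iff, h.ne]
  have := tPath_unique hT _ hp
  rw [← this]; rfl

lemma tPath_edges_subset_edgeSet {T : SimpleGraph V} (hT : T.IsTree) {u v : V} {e : Sym2 V}
    (he : e ∈ (tPath hT u v).edges) : e ∈ T.edgeSet :=
  (tPath hT u v).edges_subset_edgeSet he

/-- Stability of tree paths: if a path of `T` lives in another tree `T'`, it is its path. -/
lemma tPath_edges_eq_of_subset {T T' : SimpleGraph V} (hT : T.IsTree) (hT' : T'.IsTree)
    {u v : V} (h : ∀ e ∈ (tPath hT u v).edges, e ∈ T'.edgeSet) :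
    (tPath hT' u v).edges = (tPath hT u v).edges := by
  have hq : ((tPath hT u v).transfer T' h).IsPath :=
    SimpleGraph.Walk.IsPath.transfer h (tPath_isPath hT u v)
  have := tPath_unique hT' _ hq
  rw [← this, SimpleGraph.Walk.edges_transfer]

end TreeAux

namespace TreeAux
variable {V : Type*}

/-- The set of edges of the tree path between the two endpoints of `f`. -/
def pset {T : SimpleGraph V} (hT : T.IsTree) (f : Sym2 V) : Set (Sym2 V) :=
  {e | ∃ u v : V, f = s(u, v) ∧ e ∈ (tPath hT u v).edges}

lemma mem_pset_iff {T : SimpleGraph V} (hT : T.IsTree) {u v : V} {e : Sym2 V} :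
    e ∈ pset hT s(u, v) ↔ e ∈ (tPath hT u v).edges := by
  constructor
  · rintro ⟨a, b, hab, he⟩
    rcases Sym2.eq_iff.mp hab with ⟨rfl, rfl⟩ | ⟨rfl, rfl⟩
    · exact he
    · exact (tPath_symm_edges hT u v).mp he
  · intro he; exact ⟨u, v, rfl, he⟩

lemma pset_subset_edgeSet {T : SimpleGraph V} (hT : T.IsTree) {f e : Sym2 V}
    (he : e ∈ pset hT f) : e ∈ T.edgeSet := by
  obtain ⟨u, v, -, he⟩ := he
  exact tPath_edges_subset_edgeSet hT he

lemma pset_eq_of_subset {T T' : SimpleGraph V} (hT : T.IsTree) (hT' : T'.IsTree)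
    (f : Sym2 V) (h : ∀ e ∈ pset hT f, e ∈ T'.edgeSet) : pset hT' f = pset hT f := by
  induction f using Sym2.ind with
  | _ u v =>
    ext e
    rw [mem_pset_iff, mem_pset_iff]
    rw [tPath_edges_eq_of_subset hT hT' (fun e he => h e ((mem_pset_iff hT).mpr he))]

end TreeAux

namespace TreeAux
variable {V : Type*}

lemma exists_deletable_of_not_acyclic {G : SimpleGraph V} (hG : G.Connected)
    (ha : ¬G.IsAcyclic) : ∃ e ∈ G.edgeSet, ((G.deleteEdges {e}).Connected) := by
  simp only [SimpleGraph.IsAcyclic] at ha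
  push_neg at ha
  obtain ⟨v, c, hc⟩ := ha
  have hlen : c.edges ≠ [] := by
    have h3 := hc.three_le_length
    intro h
    have := c.length_edges
    rw [h] at this
    simp at this
    omega
  obtain ⟨e, he⟩ := List.exists_mem_of_ne_nil _ hlen
  induction e using Sym2.ind with
  | _ a b =>
    have hkey := SimpleGraph.adj_and_reachable_delete_edges_iff_exists_cycle.mpr ⟨v, c, hc, he⟩
    have hadj : G.Adj a b := hkey.1
    have hreach : (G \ SimpleGraph.fromEdgeSet {s(a, b)}).Reachable a b := hkey.2
    refine ⟨s(a, b), hadj, ?_⟩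
    have : G.deleteEdges {s(a, b)} = G \ SimpleGraph.fromEdgeSet {s(a, b)} := rfl
    rw [this]
    refine connected_transfer hG (fun x y hxy => ?_)
    by_cases hxe : s(x, y) = s(a, b)
    · rcases Sym2.eq_iff.mp hxe with ⟨rfl, rfl⟩ | ⟨rfl, rfl⟩
      · exact hreach
      · exact hreach.symm
    · refine SimpleGraph.Adj.reachable ?_
      have : (G \ SimpleGraph.fromEdgeSet {s(a, b)}) = G.deleteEdges {s(a, b)} := rfl
      rw [this, SimpleGraph.deleteEdges_adj]
      exact ⟨hxy, by simpa using hxe⟩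

lemma ncard_edgeSet_of_isTree [Fintype V] {T : SimpleGraph V} (hT : T.IsTree) :
    T.edgeSet.ncard + 1 = Fintype.card V := by
  classical
  haveI : Fintype T.edgeSet := Fintype.ofFinite _
  rw [Set.ncard_eq_toFinset_card']
  exact hT.card_edgeFinset

lemma card_le_ncard_edgeSet_add_one [Fintype V] :
    ∀ (n : ℕ) (G : SimpleGraph V), G.edgeSet.ncard = n → G.Connected →
      Fintype.card V ≤ n + 1 := by
  intro n
  induction n using Nat.strong_induction_on with
  | _ n ih =>
    intro G hn hG
    by_cases ha : G.IsAcyclic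
    · have := ncard_edgeSet_of_isTree ⟨hG, ha⟩
      omega
    · obtain ⟨e, he, hconn⟩ := exists_deletable_of_not_acyclic hG ha
      have hfin : G.edgeSet.Finite := Set.toFinite _
      have hn1 : 1 ≤ n := by
        have : 0 < G.edgeSet.ncard := (Set.ncard_pos hfin).mpr ⟨e, he⟩
        omega
      have hcard : (G.deleteEdges {e}).edgeSet.ncard = n - 1 := by
        rw [SimpleGraph.edgeSet_deleteEdges, Set.ncard_diff_singleton_of_mem he, hn]
      have := ih (n - 1) (by omega) _ hcard hconn
      omega

lemma isTree_of_connected_of_ncard [Fintype V] {G : SimpleGraph V} (hG : G.Connected)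
    (hcard : G.edgeSet.ncard + 1 = Fintype.card V) : G.IsTree := by
  refine ⟨hG, ?_⟩
  by_contra ha
  obtain ⟨e, he, hconn⟩ := exists_deletable_of_not_acyclic hG ha
  have hfin : G.edgeSet.Finite := Set.toFinite _
  have hn1 : 1 ≤ G.edgeSet.ncard := by
    have : 0 < G.edgeSet.ncard := (Set.ncard_pos hfin).mpr ⟨e, he⟩
    omega
  have hcard' : (G.deleteEdges {e}).edgeSet.ncard = G.edgeSet.ncard - 1 := by
    rw [SimpleGraph.edgeSet_deleteEdges, Set.ncard_diff_singleton_of_mem he]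
  have := card_le_ncard_edgeSet_add_one _ _ hcard' hconn
  omega

end TreeAux

namespace TreeAux
variable {V : Type*}

lemma swap_isTree [Fintype V] {T : SimpleGraph V} (hT : T.IsTree) {u v : V} (hne : u ≠ v)
    (hx : s(u, v) ∉ T.edgeSet) {y : Sym2 V} (hy : y ∈ pset hT s(u, v)) :
    ∃ T' : SimpleGraph V, T'.IsTree ∧ T'.edgeSet = insert s(u, v) T.edgeSet \ {y} := by
  set x := s(u, v) with hxdef
  set T'' := T ⊔ SimpleGraph.fromEdgeSet {x} with hT''def
  have hTle : T ≤ T'' := le_sup_left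
  have hT''edge : T''.edgeSet = insert x T.edgeSet := by
    rw [hT''def, SimpleGraph.edgeSet_sup, SimpleGraph.edgeSet_fromEdgeSet]
    have : ¬ x.IsDiag := by simp [hxdef, hne]
    ext e
    simp only [Set.mem_union, Set.mem_diff, Set.mem_singleton_iff, Set.mem_setOf_eq,
      Set.mem_insert_iff]
    constructor
    · rintro (h | ⟨rfl, -⟩)
      · exact Or.inr h
      · exact Or.inl rfl
    · rintro (rfl | h)
      · exact Or.inr ⟨rfl, this⟩
      · exact Or.inl h
  have hyT : y ∈ T.edgeSet := pset_subset_edgeSet hT hy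
  have hyp : y ∈ (tPath hT u v).edges := (mem_pset_iff hT).mp hy
  have hyx : y ≠ x := by
    rintro rfl
    exact hx hyT
  -- build a cycle in T'' containing y
  have hedgesub : ∀ e ∈ (tPath hT u v).edges, e ∈ T''.edgeSet := by
    intro e he
    exact SimpleGraph.edgeSet_mono hTle (tPath_edges_subset_edgeSet hT he)
  set q := (tPath hT u v).transfer T'' hedgesub with hqdef
  have hqpath : q.IsPath := SimpleGraph.Walk.IsPath.transfer _ (tPath_isPath hT u v)
  have hqe : q.edges = (tPath hT u v).edges := SimpleGraph.Walk.edges_transfer _ _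
  have hadj : T''.Adj v u := by
    refine (SimpleGraph.sup_adj _ _ _ _).mpr (Or.inr ?_)
    rw [SimpleGraph.fromEdgeSet_adj]
    exact ⟨by rw [hxdef, Sym2.eq_swap]; exact rfl, hne.symm⟩
  have hnotmem : s(v, u) ∉ q.edges := by
    rw [hqe]
    intro hmem
    apply hx
    rw [hxdef, Sym2.eq_swap]
    exact tPath_edges_subset_edgeSet hT hmem
  have hcyc : (SimpleGraph.Walk.cons hadj (⟨q, hqpath⟩ : T''.Path u v).val).IsCycle :=
    SimpleGraph.Path.cons_isCycle _ hadj hnotmem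
  have hyc : y ∈ (SimpleGraph.Walk.cons hadj q).edges := by
    rw [SimpleGraph.Walk.edges_cons]
    exact List.mem_cons_of_mem _ (hqe ▸ hyp)
  have hyT'' : y ∈ T''.edgeSet := SimpleGraph.edgeSet_mono hTle hyT
  have hnb : ¬ T''.IsBridge y := by
    intro hb
    exact hb.notMem_edges_of_isCycle hcyc hyc
  -- connectivity of T'' minus y
  have hT''conn : T''.Connected := hT.isConnected.mono hTle
  induction y using Sym2.ind with
  | _ a b =>
    have hadjab : T''.Adj a b := hyT''
    have hreach : (T'' \ SimpleGraph.fromEdgeSet {s(a, b)}).Reachable a b := by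
      by_contra hr
      exact hnb (SimpleGraph.isBridge_iff.mpr hr)
    refine ⟨T''.deleteEdges {s(a, b)}, ?_, ?_⟩
    · have hconn : (T''.deleteEdges {s(a, b)}).Connected := by
        have heq : T''.deleteEdges {s(a, b)} = T'' \ SimpleGraph.fromEdgeSet {s(a, b)} := rfl
        rw [heq]
        refine connected_transfer hT''conn (fun c d hcd => ?_)
        by_cases hce : s(c, d) = s(a, b)
        · rcases Sym2.eq_iff.mp hce with ⟨rfl, rfl⟩ | ⟨rfl, rfl⟩
          · exact hreach
          · exact hreach.symm
        · refine SimpleGraph.Adj.reachable ?_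
          have : (T'' \ SimpleGraph.fromEdgeSet {s(a, b)}) = T''.deleteEdges {s(a, b)} := rfl
          rw [this, SimpleGraph.deleteEdges_adj]
          exact ⟨hcd, by simpa using hce⟩
      refine isTree_of_connected_of_ncard hconn ?_
      have he1 : (T''.deleteEdges {s(a, b)}).edgeSet = insert x T.edgeSet \ {s(a, b)} := by
        rw [SimpleGraph.edgeSet_deleteEdges, hT''edge]
      rw [he1]
      have hfin : (insert x T.edgeSet).Finite := Set.toFinite _
      have hmem : s(a, b) ∈ insert x T.edgeSet := Set.mem_insert_of_mem _ hyT
      rw [Set.ncard_diff_singleton_of_mem hmem,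
        Set.ncard_insert_of_notMem hx (Set.toFinite _)]
      have := ncard_edgeSet_of_isTree hT
      have hpos : 1 ≤ T.edgeSet.ncard + 1 := by omega
      omega
    · rw [SimpleGraph.edgeSet_deleteEdges, hT''edge]

end TreeAux

namespace TreeAux
variable {V : Type*}

lemma sym2_repr (e : Sym2 V) : ∃ u v : V, e = s(u, v) := by
  induction e using Sym2.ind with
  | _ u v => exact ⟨u, v, rfl⟩

lemma batch [Fintype V] (G : SimpleGraph V) (x y : ℕ → Sym2 V) :
    ∀ (n : ℕ) (P : Finset ℕ), P.card = n → ∀ (T : SimpleGraph V) (hT : T.IsTree),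
    (∀ j ∈ P, x j ∈ G.edgeSet) → (∀ j ∈ P, x j ∉ T.edgeSet) →
    (∀ j ∈ P, ∀ l ∈ P, x j = x l → j = l) → (∀ j ∈ P, ∀ l ∈ P, y j = y l → j = l) →
    (∀ j ∈ P, y j ∈ pset hT (x j)) →
    (∀ j ∈ P, ∀ l ∈ P, j < l → y l ∉ pset hT (x j)) →
    ∃ T' : SimpleGraph V, T'.IsTree ∧
      T'.edgeSet = (T.edgeSet ∪ x '' ↑P) \ (y '' ↑P) := by
  intro n
  induction n using Nat.strong_induction_on with
  | _ n ih =>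
    intro P hcard T hT hxG hxT hxinj hyinj hyIn hord
    rcases P.eq_empty_or_nonempty with rfl | hne
    · exact ⟨T, hT, by simp⟩
    have hn1 : 1 ≤ n := by
      have := Finset.card_pos.mpr hne
      omega
    set j0 := P.max' hne with hj0def
    have hj0 : j0 ∈ P := P.max'_mem hne
    obtain ⟨u, v, huv⟩ := sym2_repr (x j0)
    have huvne : u ≠ v := by
      have := hxG j0 hj0
      rw [huv] at this
      exact ((SimpleGraph.mem_edgeSet _).mp this).ne
    have hyj0 : y j0 ∈ pset hT s(u, v) := huv ▸ hyIn j0 hj0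
    obtain ⟨T1, hT1, hT1e⟩ := swap_isTree hT huvne (huv ▸ hxT j0 hj0) hyj0
    rw [← huv] at hT1e
    set P' := P.erase j0 with hP'def
    have hmemP' : ∀ j ∈ P', j ∈ P ∧ j < j0 := by
      intro j hj
      have hjP := Finset.mem_of_mem_erase hj
      have hjne := Finset.ne_of_mem_erase hj
      exact ⟨hjP, lt_of_le_of_ne (P.le_max' j hjP) hjne⟩
    -- y j0 is a tree edge, x's are not
    have hyT : ∀ j ∈ P, y j ∈ T.edgeSet := fun j hj => pset_subset_edgeSet hT (hyIn j hj)
    have hxy : ∀ j ∈ P, ∀ l ∈ P, x j ≠ y l := by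
      intro j hj l hl h
      exact hxT j hj (h ▸ hyT l hl)
    -- pset is unchanged for earlier pairs
    have hpeq : ∀ j ∈ P', pset hT1 (x j) = pset hT (x j) := by
      intro j hj
      refine pset_eq_of_subset hT hT1 (x j) (fun e he => ?_)
      rw [hT1e]
      refine ⟨Set.mem_insert_of_mem _ (pset_subset_edgeSet hT he), ?_⟩
      intro hey
      rw [Set.mem_singleton_iff] at hey
      subst hey
      exact hord j (hmemP' j hj).1 j0 hj0 (hmemP' j hj).2 he
    have hxT1 : ∀ j ∈ P', x j ∉ T1.edgeSet := by
      intro j hj hmem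
      rw [hT1e] at hmem
      rcases hmem.1 with h | h
      · exact (hmemP' j hj).2.ne (hxinj j (hmemP' j hj).1 j0 hj0 h)
      · exact hxT j (hmemP' j hj).1 h
    obtain ⟨T', hT', hT'e⟩ := ih (n - 1) (by omega) P'
      (by rw [hP'def, Finset.card_erase_of_mem hj0, hcard]) T1 hT1
      (fun j hj => hxG j (hmemP' j hj).1) hxT1
      (fun j hj l hl h => hxinj j (hmemP' j hj).1 l (hmemP' l hl).1 h)
      (fun j hj l hl h => hyinj j (hmemP' j hj).1 l (hmemP' l hl).1 h)
      (fun j hj => (hpeq j hj) ▸ hyIn j (hmemP' j hj).1)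
      (fun j hj l hl hlt => (hpeq j hj) ▸ hord j (hmemP' j hj).1 l (hmemP' l hl).1 hlt)
    refine ⟨T', hT', ?_⟩
    rw [hT'e, hT1e]
    have hPins : (↑P : Set ℕ) = insert j0 (↑P' : Set ℕ) := by
      rw [hP'def, ← Finset.coe_insert, Finset.insert_erase hj0]
    have himgx : x '' (↑P : Set ℕ) = insert (x j0) (x '' ↑P') := by
      rw [hPins, Set.image_insert_eq]
    have himgy : y '' (↑P : Set ℕ) = insert (y j0) (y '' ↑P') := by
      rw [hPins, Set.image_insert_eq]
    rw [himgx, himgy]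
    have hyj0T : y j0 ∈ T.edgeSet := hyT j0 hj0
    have hyj0xj0 : x j0 ≠ y j0 := hxy j0 hj0 j0 hj0
    ext e
    simp only [Set.mem_diff, Set.mem_union, Set.mem_insert_iff, Set.mem_singleton_iff]
    constructor
    · rintro ⟨h1 | h1, h2⟩
      · obtain ⟨hin, hney⟩ := h1
        rcases hin with rfl | hin
        · exact ⟨Or.inr (Or.inl rfl), by tauto⟩
        · exact ⟨Or.inl hin, by tauto⟩
      · obtain ⟨l, hl, rfl⟩ := h1
        have : x l ≠ y j0 := hxy l (hmemP' l hl).1 j0 hj0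
        exact ⟨Or.inr (Or.inr ⟨l, hl, rfl⟩), by tauto⟩
    · rintro ⟨h1, h2⟩
      push_neg at h2
      obtain ⟨hne0, hne'⟩ := h2
      rcases h1 with h1 | rfl | h1
      · exact ⟨Or.inl ⟨Or.inr h1, hne0⟩, hne'⟩
      · exact ⟨Or.inl ⟨Or.inl rfl, hne0⟩, hne'⟩
      · exact ⟨Or.inr h1, hne'⟩

end TreeAux

namespace TreeAux
variable {V : Type*}

lemma exists_chain {α : Type*} {r : α → α → Prop} {g0 z : α}
    (hz : Relation.ReflTransGen r g0 z) :
    ∃ (k : ℕ) (f : ℕ → α), f 0 = g0 ∧ f k = z ∧ ∀ j, j < k → r (f j) (f (j + 1)) := by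
  induction hz with
  | refl => exact ⟨0, fun _ => g0, rfl, rfl, by omega⟩
  | @tail b c hgb hbc ih =>
    obtain ⟨k, f, h0, hk, harc⟩ := ih
    refine ⟨k + 1, fun j => if j ≤ k then f j else c, by simp [h0], by simp, ?_⟩
    intro j hj
    by_cases hjk : j < k
    · simpa [Nat.le_of_lt hjk, Nat.succ_le_of_lt hjk] using harc j hjk
    · have hjeq : j = k := by omega
      subst hjeq
      simpa [hk] using hbc

/-- The single-tree exchange arc relation. -/
def ArcI {m : ℕ} (T : Fin m → SimpleGraph V) (htree : ∀ i, (T i).IsTree)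
    (i : Fin m) (f h : Sym2 V) : Prop :=
  f ∉ (T i).edgeSet ∧ h ∈ pset (htree i) f

def Arc {m : ℕ} (T : Fin m → SimpleGraph V) (htree : ∀ i, (T i).IsTree)
    (f h : Sym2 V) : Prop :=
  ∃ i, ArcI T htree i f h

lemma removable [Fintype V] {m : ℕ} (hm : 0 < m) (G : SimpleGraph V)
    (T : Fin m → SimpleGraph V) (htree : ∀ i, (T i).IsTree)
    (hdisj : ∀ i j, i ≠ j → Disjoint (T i).edgeSet (T j).edgeSet)
    (hle : ∀ i, T i ≤ G) {g0 : Sym2 V} (hg0G : g0 ∈ G.edgeSet)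
    (hg0 : ∀ i, g0 ∉ (T i).edgeSet) {z : Sym2 V}
    (hz : Relation.ReflTransGen (Arc T htree) g0 z) :
    ∃ T' : Fin m → SimpleGraph V, (∀ i, (T' i).IsTree) ∧
      (∀ i j, i ≠ j → Disjoint (T' i).edgeSet (T' j).edgeSet) ∧
      (∀ i, (T' i).edgeSet ⊆ G.edgeSet) ∧ (∀ i, z ∉ (T' i).edgeSet) := by
  classical
  obtain ⟨k0, f0, hf0⟩ := exists_chain hz
  set Q : ℕ → Prop := fun k => ∃ f : ℕ → Sym2 V,
    f 0 = g0 ∧ f k = z ∧ ∀ j, j < k → Arc T htree (f j) (f (j + 1)) with hQdef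
  have hQex : ∃ k, Q k := ⟨k0, f0, hf0⟩
  set k := Nat.find hQex with hkdef
  obtain ⟨f, h0, hk, harc⟩ : Q k := Nat.find_spec hQex
  have hmin : ∀ k' < k, ¬ Q k' := fun k' hk' => Nat.find_min hQex hk'
  -- no repetitions
  have N1 : ∀ a b, a < b → b ≤ k → f a ≠ f b := by
    intro a b hab hbk heq
    by_cases hbk' : b = k
    · -- short chain to z of length a
      subst hbk'
      refine hmin a (by omega) ⟨f, h0, heq.symm ▸ hk ▸ (heq ▸ rfl), fun j hj => harc j (by omega)⟩
    · have hblt : b < k := by omega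
      set c := b - a with hcdef
      have hc1 : 1 ≤ c := by omega
      refine hmin (k - c) (by omega) ⟨fun j => if j ≤ a then f j else f (j + c), ?_, ?_, ?_⟩
      · simp [h0]
      · have : ¬ (k - c ≤ a) := by omega
        simp only [if_neg this]
        have : k - c + c = k := by omega
        rw [this, hk]
      · intro j hj
        by_cases hja : j < a
        · simpa [Nat.le_of_lt hja, Nat.succ_le_of_lt hja] using harc j (by omega)
        · by_cases hje : j = a
          · subst hje
            have h1 : ¬ (j + 1 ≤ j) := by omega
            simp only [if_pos (le_refl j), if_neg h1]
            have h3 : j + 1 + c = b + 1 := by omega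
            rw [h3, heq]
            exact harc b (by omega)
          · have h1 : ¬ (j ≤ a) := by omega
            have h2 : ¬ (j + 1 ≤ a) := by omega
            simp only [if_neg h1, if_neg h2]
            have h4 : j + 1 + c = j + c + 1 := by omega
            rw [h4]
            exact harc (j + c) (by omega)
  -- no shortcuts
  have N2 : ∀ a b, a + 1 < b → b ≤ k → ¬ Arc T htree (f a) (f b) := by
    intro a b hab hbk hArc
    set c := b - a - 1 with hcdef
    have hc1 : 1 ≤ c := by omega
    refine hmin (k - c) (by omega) ⟨fun j => if j ≤ a then f j else f (j + c), ?_, ?_, ?_⟩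
    · simp [h0]
    · have h1 : ¬ (k - c ≤ a) := by omega
      simp only [if_neg h1]
      have : k - c + c = k := by omega
      rw [this, hk]
    · intro j hj
      by_cases hja : j < a
      · simpa [Nat.le_of_lt hja, Nat.succ_le_of_lt hja] using harc j (by omega)
      · by_cases hje : j = a
        · subst hje
          have h1 : ¬ (j + 1 ≤ j) := by omega
          simp only [if_pos (le_refl j), if_neg h1]
          have : j + 1 + c = b := by omega
          rw [this]
          exact hArc
        · have h1 : ¬ (j ≤ a) := by omega
          have h2 : ¬ (j + 1 ≤ a) := by omega
          simp only [if_neg h1, if_neg h2]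
          have h4 : j + 1 + c = j + c + 1 := by omega
          rw [h4]
          exact harc (j + c) (by omega)
  rw [← hk]
  -- trivial case: empty chain
  rcases Nat.eq_zero_or_pos k with hk0 | hkpos
  · refine ⟨T, htree, hdisj, fun i => SimpleGraph.edgeSet_mono (hle i), fun i => ?_⟩
    rw [hk0, h0]
    exact hg0 i
  -- labels for the arcs
  have hlab0 : ∀ j : ℕ, ∃ i : Fin m, j < k → ArcI T htree i (f j) (f (j + 1)) := by
    intro j
    by_cases hj : j < k
    · obtain ⟨i, hi⟩ := harc j hj
      exact ⟨i, fun _ => hi⟩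
    · exact ⟨⟨0, hm⟩, fun h => absurd h hj⟩
  choose lab hlab using hlab0
  have hfT : ∀ j, j < k → f (j + 1) ∈ (T (lab j)).edgeSet :=
    fun j hj => pset_subset_edgeSet _ ((hlab j hj).2)
  have hfG : ∀ j, j ≤ k → f j ∈ G.edgeSet := by
    intro j hj
    cases j with
    | zero => rw [h0]; exact hg0G
    | succ j' => exact SimpleGraph.edgeSet_mono (hle (lab j')) (hfT j' (by omega))
  have hmemT : ∀ a, a ≤ k → ∀ i, f a ∈ (T i).edgeSet → 1 ≤ a ∧ i = lab (a - 1) := by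
    intro a ha i hmem
    cases a with
    | zero => rw [h0] at hmem; exact absurd hmem (hg0 i)
    | succ a' =>
      refine ⟨by omega, ?_⟩
      by_contra hne
      have h1 : f (a' + 1) ∈ (T (lab a')).edgeSet := hfT a' (by omega)
      have h2 : lab (a' + 1 - 1) = lab a' := by norm_num
      rw [h2] at hne
      exact Set.disjoint_left.mp (hdisj i (lab a') hne) hmem h1
  -- apply the batch swap in each tree
  have hbatch : ∀ i : Fin m, ∃ T' : SimpleGraph V, T'.IsTree ∧
      T'.edgeSet = ((T i).edgeSet ∪ f '' ↑((Finset.range k).filter (fun j => lab j = i)))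
        \ ((fun j => f (j + 1)) '' ↑((Finset.range k).filter (fun j => lab j = i))) := by
    intro i
    set P := (Finset.range k).filter (fun j => lab j = i) with hPdef
    have hmem : ∀ j ∈ P, j < k ∧ lab j = i := by
      intro j hj
      rw [hPdef, Finset.mem_filter, Finset.mem_range] at hj
      exact hj
    refine batch G f (fun j => f (j + 1)) P.card P rfl (T i) (htree i) ?_ ?_ ?_ ?_ ?_ ?_
    · intro j hj
      exact hfG j (le_of_lt (hmem j hj).1)
    · intro j hj
      have := (hlab j (hmem j hj).1).1
      rw [(hmem j hj).2] at this
      exact this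
    · intro j hj l hl h
      rcases lt_trichotomy j l with hlt | heq | hgt
      · exact absurd h (N1 j l hlt (by have := (hmem l hl).1; omega))
      · exact heq
      · exact absurd h.symm (N1 l j hgt (by have := (hmem j hj).1; omega))
    · intro j hj l hl h
      rcases lt_trichotomy j l with hlt | heq | hgt
      · exact absurd h (N1 (j+1) (l+1) (by omega) (by have := (hmem l hl).1; omega))
      · exact heq
      · exact absurd h.symm (N1 (l+1) (j+1) (by omega) (by have := (hmem j hj).1; omega))
    · intro j hj
      have := (hlab j (hmem j hj).1).2
      rw [(hmem j hj).2] at this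
      exact this
    · intro j hj l hl hlt hmemp
      have hxj : f j ∉ (T i).edgeSet := by
        have := (hlab j (hmem j hj).1).1
        rwa [(hmem j hj).2] at this
      refine N2 j (l + 1) (by omega) (by have := (hmem l hl).1; omega) ⟨i, hxj, hmemp⟩
  choose T' hT'tree hT'e using hbatch
  have hX : ∀ (i : Fin m) (e : Sym2 V),
      e ∈ f '' ↑((Finset.range k).filter (fun j => lab j = i)) ↔
        ∃ j, j < k ∧ lab j = i ∧ f j = e := by
    intro i e
    constructor
    · rintro ⟨j, hj, rfl⟩
      simp only [Finset.coe_filter, Finset.mem_range, Set.mem_setOf_eq] at hj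
      exact ⟨j, hj.1, hj.2, rfl⟩
    · rintro ⟨j, h1, h2, rfl⟩
      exact ⟨j, by simp [h1, h2], rfl⟩
  have hY : ∀ (i : Fin m) (e : Sym2 V),
      e ∈ (fun j => f (j + 1)) '' ↑((Finset.range k).filter (fun j => lab j = i)) ↔
        ∃ j, j < k ∧ lab j = i ∧ f (j + 1) = e := by
    intro i e
    constructor
    · rintro ⟨j, hj, rfl⟩
      simp only [Finset.coe_filter, Finset.mem_range, Set.mem_setOf_eq] at hj
      exact ⟨j, hj.1, hj.2, rfl⟩
    · rintro ⟨j, h1, h2, rfl⟩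
      exact ⟨j, by simp [h1, h2], rfl⟩
  refine ⟨T', hT'tree, ?_, ?_, ?_⟩
  · intro i j hij
    rw [Set.disjoint_left]
    intro e hei hej
    rw [hT'e i] at hei
    rw [hT'e j] at hej
    obtain ⟨hei1, hei2⟩ := hei
    obtain ⟨hej1, hej2⟩ := hej
    rcases hei1 with hTi | hXi
    · rcases hej1 with hTj | hXj
      · exact Set.disjoint_left.mp (hdisj i j hij) hTi hTj
      · obtain ⟨a, ha, hlaba, rfl⟩ := (hX j e).mp hXj
        obtain ⟨ha1, ha2⟩ := hmemT a (by omega) i hTi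
        refine hei2 ((hY i (f a)).mpr ⟨a - 1, by omega, ha2.symm, by rw [Nat.sub_add_cancel ha1]⟩)
    · rcases hej1 with hTj | hXj
      · obtain ⟨a, ha, hlaba, rfl⟩ := (hX i e).mp hXi
        obtain ⟨ha1, ha2⟩ := hmemT a (by omega) j hTj
        refine hej2 ((hY j (f a)).mpr ⟨a - 1, by omega, ha2.symm, by rw [Nat.sub_add_cancel ha1]⟩)
      · obtain ⟨a, ha, hlaba, rfl⟩ := (hX i e).mp hXi
        obtain ⟨b, hb, hlabb, heq⟩ := (hX j (f a)).mp hXj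
        have hab : b = a := by
          rcases lt_trichotomy b a with h | h | h
          · exact absurd heq (N1 b a h (by omega))
          · exact h
          · exact absurd heq.symm (N1 a b h (by omega))
        subst hab
        exact hij (hlaba ▸ hlabb)
  · intro i
    rw [hT'e i]
    intro e he
    rcases he.1 with h | h
    · exact SimpleGraph.edgeSet_mono (hle i) h
    · obtain ⟨a, ha, -, rfl⟩ := (hX i e).mp h
      exact hfG a (by omega)
  · intro i
    rw [hT'e i]
    rintro ⟨h1, h2⟩
    rcases h1 with hT | hXi
    · obtain ⟨ha1, ha2⟩ := hmemT k le_rfl i hT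
      exact h2 ((hY i (f k)).mpr ⟨k - 1, by omega, ha2.symm, by rw [Nat.sub_add_cancel ha1]⟩)
    · obtain ⟨a, ha, -, heq⟩ := (hX i (f k)).mp hXi
      exact N1 a k ha le_rfl heq

end TreeAux


namespace TreeAux
variable {V : Type*}

lemma ncard_biUnion {α ι : Type*} [DecidableEq ι] (s : Finset ι) (A : ι → Set α)
    (hfin : ∀ i, (A i).Finite)
    (hdisj : ∀ i ∈ s, ∀ j ∈ s, i ≠ j → Disjoint (A i) (A j)) :
    (⋃ i ∈ s, A i).ncard = ∑ i ∈ s, (A i).ncard := by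
  induction s using Finset.induction with
  | empty => simp
  | @insert a s ha ih =>
    rw [Finset.sum_insert ha]
    have hU : (⋃ i ∈ insert a s, A i) = A a ∪ ⋃ i ∈ s, A i := by
      simp [Set.biUnion_insert]
    rw [hU]
    have hfinU : (⋃ i ∈ s, A i).Finite := Set.Finite.biUnion s.finite_toSet (fun i _ => hfin i)
    have hdisj2 : Disjoint (A a) (⋃ i ∈ s, A i) := by
      rw [Set.disjoint_left]
      intro e he hmem
      simp only [Set.mem_iUnion] at hmem
      obtain ⟨i, hi, hei⟩ := hmem
      have hne : a ≠ i := fun h => ha (h ▸ hi)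
      exact Set.disjoint_left.mp
        (hdisj a (Finset.mem_insert_self a s) i (Finset.mem_insert_of_mem hi) hne) he hei
    rw [Set.ncard_union_eq hdisj2 (hfin a) hfinU,
      ih (fun i hi j hj hij =>
        hdisj i (Finset.mem_insert_of_mem hi) j (Finset.mem_insert_of_mem hj) hij)]

lemma exists_cons_of_ne {W : SimpleGraph V} {a b : V} (w : W.Walk a b) (hab : a ≠ b) :
    ∃ (c : V) (h : W.Adj a c) (q : W.Walk c b), w = SimpleGraph.Walk.cons h q := by
  cases w with
  | nil => exact absurd rfl hab
  | cons h q => exact ⟨_, h, q, rfl⟩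

end TreeAux


namespace TreeAux

lemma final_contra {V : Type*} [Fintype V] {m : ℕ} (hm : 0 < m) (M : SimpleGraph V)
    (T : Fin m → SimpleGraph V) (htree : ∀ i, (T i).IsTree)
    (hdisj : ∀ i j, i ≠ j → Disjoint (T i).edgeSet (T j).edgeSet)
    {g0 : Sym2 V} (hg0 : ∀ i, g0 ∉ (T i).edgeSet)
    (hsub : ∀ z, Relation.ReflTransGen (Arc T htree) g0 z → z ∈ M.edgeSet)
    (hsp : IsSparse m M) : False := by
  classical
  set R0 : Set (Sym2 V) := {z | Relation.ReflTransGen (Arc T htree) g0 z} with hR0def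
  have hg0R : g0 ∈ R0 := Relation.ReflTransGen.refl
  have hclos : ∀ z ∈ R0, ∀ w, Arc T htree z w → w ∈ R0 :=
    fun z hz w hzw => Relation.ReflTransGen.tail hz hzw
  obtain ⟨s0, b0, hg0eq⟩ := sym2_repr g0
  set S : Set V := {v | ∃ e ∈ R0, v ∈ e} with hSdef
  have hs0S : s0 ∈ S := ⟨g0, hg0R, by rw [hg0eq]; exact Sym2.mem_mk_left _ _⟩
  have EP : ∀ e ∈ R0, ∀ (i : Fin m) (u v : V), e = s(u, v) →
      ∀ e' ∈ (tPath (htree i) u v).edges, e' ∈ R0 := by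
    intro e he i u v huv e' he'
    by_cases hT : e ∈ (T i).edgeSet
    · have hadj : (T i).Adj u v := by rw [huv] at hT; exact hT
      rw [tPath_adj (htree i) hadj] at he'
      simp only [List.mem_singleton] at he'
      rw [he', ← huv]
      exact he
    · exact hclos e he e' ⟨i, hT, by rw [huv]; exact (mem_pset_iff (htree i)).mpr he'⟩
  set Good : V → Prop := fun v => ∀ (i : Fin m), ∀ e' ∈ (tPath (htree i) v s0).edges, e' ∈ R0
    with hGdef
  have hGood_s0 : Good s0 := by
    intro i e' he'
    rw [tPath_nil (htree i) s0] at he'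
    simp at he'
  have G2 : ∀ a b : V, Good a → ∀ e ∈ R0, e = s(a, b) → Good b := by
    intro a b hGa e he heq i e' he'
    have htri : e' ∈ ((tPath (htree i) b a).append (tPath (htree i) a s0)).edges :=
      tPath_edges_subset_walk (htree i) _ e' he'
    rw [SimpleGraph.Walk.edges_append, List.mem_append] at htri
    rcases htri with h | h
    · exact EP e he i b a (by rw [heq, Sym2.eq_swap]) e' h
    · exact hGa i e' h
  have WG : ∀ (i : Fin m) (a b : V) (p : (T i).Walk a b), (∀ e ∈ p.edges, e ∈ R0) →
      Good a → ∀ v ∈ p.support, Good v := by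
    intro i a b p
    induction p with
    | nil =>
      intro _ hGa v hv
      rw [SimpleGraph.Walk.support_nil] at hv
      simp only [List.mem_singleton] at hv
      rwa [hv]
    | @cons u c w h q ih =>
      intro hedges hGa v hv
      have hec : s(u, c) ∈ R0 := hedges _ (by simp)
      have hGc : Good c := G2 u c hGa _ hec rfl
      rw [SimpleGraph.Walk.support_cons] at hv
      rcases List.mem_cons.mp hv with rfl | hv
      · exact hGa
      · exact ih (fun e he => hedges e (by simp [he])) hGc v hv
  have hGoodAll : ∀ e ∈ R0, ∀ v ∈ e, Good v := by
    intro e he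
    have he' : Relation.ReflTransGen (Arc T htree) g0 e := he
    clear he
    induction he' with
    | refl =>
      intro v hv
      rw [hg0eq] at hv
      rcases Sym2.mem_iff.mp hv with h | h
      · rw [h]; exact hGood_s0
      · rw [h]; exact G2 s0 b0 hGood_s0 g0 hg0R hg0eq
    | @tail e' e hge' harc ih =>
      intro v hv
      obtain ⟨i, hnT, hpset⟩ := harc
      obtain ⟨u', v', heq'⟩ := sym2_repr e'
      have hIH : Good u' := ih u' (by rw [heq']; exact Sym2.mem_mk_left _ _)
      have hge'' : e' ∈ R0 := hge'
      have hpedges : ∀ e'' ∈ (tPath (htree i) u' v').edges, e'' ∈ R0 := by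
        intro e'' he''
        exact hclos e' hge'' e'' ⟨i, hnT, by rw [heq']; exact (mem_pset_iff (htree i)).mpr he''⟩
      have hmem : e ∈ (tPath (htree i) u' v').edges := by
        rw [heq'] at hpset
        exact (mem_pset_iff (htree i)).mp hpset
      obtain ⟨c, d, hcd⟩ := sym2_repr e
      have hvsup : v ∈ (tPath (htree i) u' v').support := by
        rw [hcd] at hmem hv
        rcases Sym2.mem_iff.mp hv with rfl | rfl
        · exact SimpleGraph.Walk.fst_mem_support_of_mem_edges _ hmem
        · exact SimpleGraph.Walk.snd_mem_support_of_mem_edges _ hmem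
      exact WG i u' v' _ hpedges hIH v hvsup
  -- the first-edge injection
  have hinj : ∀ i : Fin m, (S \ {s0}).ncard ≤ (R0 ∩ (T i).edgeSet).ncard := by
    intro i
    set F : V → Sym2 V := fun v => ((tPath (htree i) v s0).edges).getD 0 s(s0, s0) with hFdef
    have hFspec : ∀ v ∈ S \ {s0}, ∃ (c : V) (h : (T i).Adj v c) (q : (T i).Walk c s0),
        tPath (htree i) v s0 = SimpleGraph.Walk.cons h q ∧ F v = s(v, c) ∧
        q = tPath (htree i) c s0 := by
      intro v hv
      have hvne : v ≠ s0 := by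
        intro h
        exact hv.2 (by rw [h]; rfl)
      obtain ⟨c, h, q, hw⟩ := exists_cons_of_ne (tPath (htree i) v s0) hvne
      have hq : q.IsPath ∧ v ∉ q.support := by
        have := tPath_isPath (htree i) v s0
        rw [hw, SimpleGraph.Walk.cons_isPath_iff] at this
        exact this
      refine ⟨c, h, q, hw, ?_, (tPath_unique (htree i) q hq.1)⟩
      rw [hFdef]
      simp only []
      rw [hw, SimpleGraph.Walk.edges_cons]
      rfl
    have hmaps : ∀ v ∈ S \ {s0}, F v ∈ R0 ∩ (T i).edgeSet := by
      intro v hv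
      obtain ⟨c, h, q, hw, hF, -⟩ := hFspec v hv
      have hmemE : F v ∈ (tPath (htree i) v s0).edges := by
        rw [hw, SimpleGraph.Walk.edges_cons, hF]
        exact List.mem_cons_self
      have hGv : Good v := by
        obtain ⟨e, he, hve⟩ := hv.1
        exact hGoodAll e he v hve
      exact ⟨hGv i _ hmemE, SimpleGraph.Walk.edges_subset_edgeSet _ hmemE⟩
    have hinjOn : Set.InjOn F (S \ {s0}) := by
      intro u hu v hv huv
      by_contra hne
      obtain ⟨cu, hu', qu, hwu, hFu, hqu⟩ := hFspec u hu
      obtain ⟨cv, hv', qv, hwv, hFv, hqv⟩ := hFspec v hv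
      rw [hFu, hFv] at huv
      rcases Sym2.eq_iff.mp huv with ⟨h1, h2⟩ | ⟨h1, h2⟩
      · exact hne h1
      · -- h1 : u = cv, h2 : cu = v
        have hup : u ∉ qu.support := by
          have := tPath_isPath (htree i) u s0
          rw [hwu, SimpleGraph.Walk.cons_isPath_iff] at this
          exact this.2
        apply hup
        rw [hqu, h2, hwv, SimpleGraph.Walk.support_cons]
        refine List.mem_cons_of_mem _ ?_
        rw [h1]
        exact qv.start_mem_support
    exact Set.ncard_le_ncard_of_injOn F hmaps hinjOn (Set.toFinite _)
  -- counting
  have hSfin : S.Finite := Set.toFinite _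
  have hS1 : 1 ≤ S.ncard := by
    have : 0 < S.ncard := (Set.ncard_pos hSfin).mpr ⟨s0, hs0S⟩
    omega
  have hScard : (S \ {s0}).ncard = S.ncard - 1 := Set.ncard_diff_singleton_of_mem hs0S
  have hR0split : R0 = insert g0 (⋃ i ∈ (Finset.univ : Finset (Fin m)), (R0 ∩ (T i).edgeSet)) := by
    apply Set.Subset.antisymm
    · intro z hz
      have hz' : Relation.ReflTransGen (Arc T htree) g0 z := hz
      rcases Relation.ReflTransGen.cases_tail hz' with h | ⟨w, hw, harc⟩
      · rw [h]
        exact Set.mem_insert _ _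
      · obtain ⟨i, hnT, hpset⟩ := harc
        refine Set.mem_insert_of_mem _ ?_
        simp only [Set.mem_iUnion]
        exact ⟨i, Finset.mem_univ i, hz, pset_subset_edgeSet (htree i) hpset⟩
    · intro z hz
      rcases Set.mem_insert_iff.mp hz with rfl | hz
      · exact hg0R
      · simp only [Set.mem_iUnion, Set.mem_inter_iff] at hz
        obtain ⟨i, -, hzR, -⟩ := hz
        exact hzR
  have hg0notU : g0 ∉ (⋃ i ∈ (Finset.univ : Finset (Fin m)), (R0 ∩ (T i).edgeSet)) := by
    intro hmem
    simp only [Set.mem_iUnion, Set.mem_inter_iff] at hmem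
    obtain ⟨i, -, -, hTi⟩ := hmem
    exact hg0 i hTi
  have hcard1 : R0.ncard =
      1 + (⋃ i ∈ (Finset.univ : Finset (Fin m)), (R0 ∩ (T i).edgeSet)).ncard := by
    have hh := Set.ncard_insert_of_notMem hg0notU (Set.toFinite _)
    rw [← hR0split] at hh
    omega
  have hcard2 : (⋃ i ∈ (Finset.univ : Finset (Fin m)), (R0 ∩ (T i).edgeSet)).ncard
      = ∑ i : Fin m, (R0 ∩ (T i).edgeSet).ncard :=
    ncard_biUnion _ _ (fun _ => Set.toFinite _)
      (fun i _ j _ hij =>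
        (hdisj i j hij).mono Set.inter_subset_right Set.inter_subset_right)
  have hsum : (S.ncard - 1) * m ≤ ∑ i : Fin m, (R0 ∩ (T i).edgeSet).ncard := by
    calc (S.ncard - 1) * m = ∑ _i : Fin m, (S.ncard - 1) := by
          simp [Finset.sum_const, Finset.card_univ, mul_comm]
      _ ≤ _ := Finset.sum_le_sum fun i _ => (hScard ▸ hinj i)
  have hR0sub : R0 ⊆ {e ∈ M.edgeSet | ∀ v ∈ e, v ∈ S} := by
    intro e he
    exact ⟨hsub e he, fun v hv => ⟨e, he, hv⟩⟩
  have hEin : R0.ncard ≤ eIn M S := Set.ncard_le_ncard hR0sub (Set.toFinite _)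
  have hspS := hsp S ⟨s0, hs0S⟩
  have hNat : 1 + (S.ncard - 1) * m ≤ eIn M S := by
    have h1 : R0.ncard = 1 + ∑ i : Fin m, (R0 ∩ (T i).edgeSet).ncard := by
      rw [hcard1, hcard2]
    omega
  have hZ : (1 : ℤ) + ((S.ncard : ℤ) - 1) * m ≤ (eIn M S : ℤ) := by
    have := (Nat.cast_le (α := ℤ)).mpr hNat
    push_cast [Nat.cast_sub hS1] at this
    convert this using 2
  linarith

end TreeAux


theorem stmt10 {V : Type*} [Fintype V] (m : ℕ) (hm : 0 < m) (G M : SimpleGraph V)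
    (hMG : M ≤ G) (hsp : IsSparse m M) (htc : IsTreeConn m G)
    (hdel : ∀ e ∈ G.edgeSet, e ∉ M.edgeSet → ¬ IsTreeConn m (G.deleteEdges {e})) :
    (G.edgeSet.ncard : ℤ) = m * ((Fintype.card V : ℤ) - 1) := by
  classical
  obtain ⟨T, hle, htree, hdisj⟩ := htc
  have hNon : Nonempty V := (htree ⟨0, hm⟩).isConnected.nonempty
  have hn1 : 1 ≤ Fintype.card V := Fintype.card_pos
  by_cases hcov : G.edgeSet ⊆ ⋃ i ∈ (Finset.univ : Finset (Fin m)), (T i).edgeSet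
  · have heq : G.edgeSet = ⋃ i ∈ (Finset.univ : Finset (Fin m)), (T i).edgeSet := by
      apply Set.Subset.antisymm hcov
      intro e he
      simp only [Set.mem_iUnion] at he
      obtain ⟨i, -, hei⟩ := he
      exact SimpleGraph.edgeSet_mono (hle i) hei
    have hcount : G.edgeSet.ncard = m * (Fintype.card V - 1) := by
      rw [heq, TreeAux.ncard_biUnion _ _ (fun _ => Set.toFinite _)
        (fun i _ j _ hij => hdisj i j hij)]
      have htc : ∀ i : Fin m, (T i).edgeSet.ncard = Fintype.card V - 1 := by
        intro i
        have := TreeAux.ncard_edgeSet_of_isTree (htree i)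
        omega
      rw [Finset.sum_congr rfl (fun i _ => htc i)]
      simp [Finset.sum_const, Finset.card_univ]
    rw [hcount]
    push_cast [Nat.cast_sub hn1]
    ring
  · exfalso
    obtain ⟨g0, hg0G, hg0U⟩ := Set.not_subset.mp hcov
    have hg0 : ∀ i, g0 ∉ (T i).edgeSet := by
      intro i hmem
      exact hg0U (by simp only [Set.mem_iUnion]; exact ⟨i, Finset.mem_univ i, hmem⟩)
    have hR0G : ∀ z, Relation.ReflTransGen (TreeAux.Arc T htree) g0 z → z ∈ G.edgeSet := by
      intro z hz
      induction hz with
      | refl => exact hg0G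
      | tail h1 h2 ih =>
        obtain ⟨i, -, hpset⟩ := h2
        exact SimpleGraph.edgeSet_mono (hle i) (TreeAux.pset_subset_edgeSet _ hpset)
    have hsub : ∀ z, Relation.ReflTransGen (TreeAux.Arc T htree) g0 z → z ∈ M.edgeSet := by
      intro z hz
      by_contra hzM
      obtain ⟨T', htree', hdisj', hsubG, hznot⟩ :=
        TreeAux.removable hm G T htree hdisj hle hg0G hg0 hz
      refine hdel z (hR0G z hz) hzM ⟨T', fun i => ?_, htree', hdisj'⟩
      rw [← SimpleGraph.edgeSet_subset_edgeSet, SimpleGraph.edgeSet_deleteEdges]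
      intro e he
      refine ⟨hsubG i he, fun hez => ?_⟩
      rw [Set.mem_singleton_iff] at hez
      exact (hznot i) (hez ▸ he)
    exact TreeAux.final_contra hm M T htree hdisj hg0 hsub hsp
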